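/- The function u(x,t) = a₂ · tanh(x − ((5a + α a₂²)/5) t)² satisfies the Gardner-Kawahara equation u_t + a u_x + λ u u_x − α u² u_x + μ u_xxx + β u_xxxxx = 0, where β = α a₂²/360, λ = 16 α a₂/15, and μ = α a₂²/45. -/

import Mathlib

/-- Derivative of real tanh. -/
lemma gk_tanh_hasDerivAt (x : ℝ) :
    HasDerivAt Real.tanh (1 - Real.tanh x ^ 2) x := by
  have hc : Real.cosh x ≠ 0 := ne_of_gt (Real.cosh_pos x)
  have h : HasDerivAt (fun y => Real.sinh y / Real.cosh y)
      ((Real.cosh x * Real.cosh x - Real.sinh x * Real.sinh x) / Real.cosh x ^ 2) x :=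
    (Real.hasDerivAt_sinh x).div (Real.hasDerivAt_cosh x) hc
  have hfun : Real.tanh = fun y => Real.sinh y / Real.cosh y := by
    funext y; exact Real.tanh_eq_sinh_div_cosh y
  rw [hfun]
  convert h using 1
  have hsq := Real.cosh_sq_sub_sinh_sq x
  simp only []
  field_simp

/-- Derivative of tanh composed with translation. -/
lemma gk_hT (b x : ℝ) :
    HasDerivAt (fun y => Real.tanh (y - b)) (1 - Real.tanh (x - b) ^ 2) x := by
  simpa [Function.comp_def] using (gk_tanh_hasDerivAt (x - b)).comp x ((hasDerivAt_id x).sub_const b)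

lemma gk_L0 (a2 b x : ℝ) :
    HasDerivAt (fun y => a2 * Real.tanh (y - b) ^ 2)
      (a2 * (2 * Real.tanh (x - b) - 2 * Real.tanh (x - b) ^ 3)) x := by
  have h := ((gk_hT b x).pow 2).const_mul a2
  refine h.congr_deriv ?_; ring

lemma gk_L1 (a2 b x : ℝ) :
    HasDerivAt (fun y => a2 * (2 * Real.tanh (y - b) - 2 * Real.tanh (y - b) ^ 3))
      (a2 * (2 - 8 * Real.tanh (x - b) ^ 2 + 6 * Real.tanh (x - b) ^ 4)) x := by
  have h := (((gk_hT b x).const_mul 2).sub (((gk_hT b x).pow 3).const_mul 2)).const_mul a2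
  refine h.congr_deriv ?_; ring

lemma gk_L2 (a2 b x : ℝ) :
    HasDerivAt (fun y => a2 * (2 - 8 * Real.tanh (y - b) ^ 2 + 6 * Real.tanh (y - b) ^ 4))
      (a2 * (-16 * Real.tanh (x - b) + 40 * Real.tanh (x - b) ^ 3
        - 24 * Real.tanh (x - b) ^ 5)) x := by
  have h := ((((hasDerivAt_const x (2:ℝ)).sub (((gk_hT b x).pow 2).const_mul 8)).add
      (((gk_hT b x).pow 4).const_mul 6))).const_mul a2
  refine h.congr_deriv ?_; ring

lemma gk_L3 (a2 b x : ℝ) :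
    HasDerivAt (fun y => a2 * (-16 * Real.tanh (y - b) + 40 * Real.tanh (y - b) ^ 3
        - 24 * Real.tanh (y - b) ^ 5))
      (a2 * (-16 + 136 * Real.tanh (x - b) ^ 2 - 240 * Real.tanh (x - b) ^ 4
        + 120 * Real.tanh (x - b) ^ 6)) x := by
  have h := ((((gk_hT b x).const_mul (-16)).add (((gk_hT b x).pow 3).const_mul 40)).sub
      (((gk_hT b x).pow 5).const_mul 24)).const_mul a2
  refine h.congr_deriv ?_; ring

lemma gk_L4 (a2 b x : ℝ) :
    HasDerivAt (fun y => a2 * (-16 + 136 * Real.tanh (y - b) ^ 2 - 240 * Real.tanh (y - b) ^ 4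
        + 120 * Real.tanh (y - b) ^ 6))
      (a2 * (272 * Real.tanh (x - b) - 1232 * Real.tanh (x - b) ^ 3
        + 1680 * Real.tanh (x - b) ^ 5 - 720 * Real.tanh (x - b) ^ 7)) x := by
  have h := ((((hasDerivAt_const x (-16:ℝ)).add (((gk_hT b x).pow 2).const_mul 136)).sub
      (((gk_hT b x).pow 4).const_mul 240)).add
      (((gk_hT b x).pow 6).const_mul 120)).const_mul a2
  refine h.congr_deriv ?_; ring

/-- The tanh-squared solution (Set 1) of the Gardner-Kawahara equation. -/
theorem gardner_kawahara_tanh_solution_set1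
    (a alpha a2 : ℝ)
    (beta lam mu c : ℝ)
    (hbeta : beta = alpha * a2 ^ 2 / 360)
    (hlam : lam = 16 * alpha * a2 / 15)
    (hmu : mu = alpha * a2 ^ 2 / 45)
    (hc : c = (5 * a + alpha * a2 ^ 2) / 5)
    (u : ℝ → ℝ → ℝ)
    (hu : ∀ x t, u x t = a2 * (Real.tanh (x - c * t)) ^ 2) :
    ∀ x t : ℝ,
      deriv (fun t' => u x t') t + a * deriv (fun x' => u x' t) x
        + lam * u x t * deriv (fun x' => u x' t) x
        - alpha * (u x t) ^ 2 * deriv (fun x' => u x' t) x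
        + mu * iteratedDeriv 3 (fun x' => u x' t) x
        + beta * iteratedDeriv 5 (fun x' => u x' t) x = 0 := by
  intro x t
  set b := c * t with hb
  set T := Real.tanh (x - b) with hTdef
  -- space profile
  have hfx : (fun x' => u x' t) = fun x' => a2 * Real.tanh (x' - b) ^ 2 :=
    funext fun x' => hu x' t
  -- first spatial derivative
  have d1 : deriv (fun x' => u x' t) x = a2 * (2 * T - 2 * T ^ 3) := by
    rw [hfx]; exact (gk_L0 a2 b x).deriv
  -- iterated derivatives as functions
  have i1 : iteratedDeriv 1 (fun x' => u x' t)
      = fun y => a2 * (2 * Real.tanh (y - b) - 2 * Real.tanh (y - b) ^ 3) := by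
    rw [iteratedDeriv_one, hfx]; funext y; exact (gk_L0 a2 b y).deriv
  have i2 : iteratedDeriv 2 (fun x' => u x' t)
      = fun y => a2 * (2 - 8 * Real.tanh (y - b) ^ 2 + 6 * Real.tanh (y - b) ^ 4) := by
    rw [iteratedDeriv_succ, i1]; funext y; exact (gk_L1 a2 b y).deriv
  have i3 : iteratedDeriv 3 (fun x' => u x' t)
      = fun y => a2 * (-16 * Real.tanh (y - b) + 40 * Real.tanh (y - b) ^ 3
          - 24 * Real.tanh (y - b) ^ 5) := by
    rw [iteratedDeriv_succ, i2]; funext y; exact (gk_L2 a2 b y).deriv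
  have i4 : iteratedDeriv 4 (fun x' => u x' t)
      = fun y => a2 * (-16 + 136 * Real.tanh (y - b) ^ 2 - 240 * Real.tanh (y - b) ^ 4
          + 120 * Real.tanh (y - b) ^ 6) := by
    rw [iteratedDeriv_succ, i3]; funext y; exact (gk_L3 a2 b y).deriv
  have i5 : iteratedDeriv 5 (fun x' => u x' t)
      = fun y => a2 * (272 * Real.tanh (y - b) - 1232 * Real.tanh (y - b) ^ 3
          + 1680 * Real.tanh (y - b) ^ 5 - 720 * Real.tanh (y - b) ^ 7) := by
    rw [iteratedDeriv_succ, i4]; funext y; exact (gk_L4 a2 b y).deriv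
  -- time derivative
  have dt : deriv (fun t' => u x t') t = a2 * (2 * T - 2 * T ^ 3) * (-c) := by
    have hft : (fun t' => u x t') = fun t' => a2 * Real.tanh (x - c * t') ^ 2 :=
      funext fun t' => hu x t'
    rw [hft]
    have hinner : HasDerivAt (fun t' : ℝ => x - c * t') (-c) t := by
      simpa using ((hasDerivAt_id t).const_mul c).const_sub x
    have htanh : HasDerivAt (fun t' => Real.tanh (x - c * t'))
        ((1 - Real.tanh (x - c * t) ^ 2) * (-c)) t :=
      (gk_tanh_hasDerivAt (x - c * t)).comp t hinner (h₂ := Real.tanh)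
    have h := (htanh.pow 2).const_mul a2
    have := h.deriv
    refine this.trans ?_
    simp only [hTdef, hb]
    ring
  rw [dt, d1, i3, i5, hu x t]
  simp only [hTdef, hb]
  rw [hbeta, hlam, hmu, hc]
  ring
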